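/- Let P be Lebesgue measure on [0,1] and A_{2^{i−1}+k} = [k/2^i, (k+1)/2^i] ∪ [1/2, 1] for i ≥ 1, 0 ≤ k < 2^{i−1}. Let τ: ℕ → ℕ be any strictly increasing function and p ∈ (0,1). Then E[((∑_{i=1}^n 1_{A_{τ(i)}})/(∑_{i=1}^n P(A_{τ(i)})))^p] ≤ ((log₂ 2n)^p · (1/2)^{1−p} + n^p/2) / (n/2)^p for every n ≥ 1. -/

import Mathlib

open MeasureTheory Filter Set

/-- For `n = 2^(i-1) + k` with `i ≥ 1` and `0 ≤ k < 2^(i-1)`, the event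
`A_n = [k/2^i, (k+1)/2^i] ∪ [1/2, 1]`. Here `Nat.log 2 n = i - 1`. -/
noncomputable def dyadicA (n : ℕ) : Set ℝ :=
  Set.Icc (((n : ℝ) - 2 ^ Nat.log 2 n) / 2 ^ (Nat.log 2 n + 1))
      (((n : ℝ) - 2 ^ Nat.log 2 n + 1) / 2 ^ (Nat.log 2 n + 1)) ∪
    Set.Icc (1 / 2 : ℝ) 1

lemma dyadicA_meas (m : ℕ) : MeasurableSet (dyadicA m) :=
  measurableSet_Icc.union measurableSet_Icc

lemma dyadicA_half_le (m : ℕ) :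
    (1/2 : ℝ) ≤ ((volume.restrict (Set.Icc (0 : ℝ) 1)) (dyadicA m)).toReal := by
  have h1 : (volume.restrict (Set.Icc (0 : ℝ) 1)) (Set.Icc (1/2 : ℝ) 1) = ENNReal.ofReal (1/2) := by
    rw [Measure.restrict_apply measurableSet_Icc]
    have : Set.Icc (1/2 : ℝ) 1 ∩ Set.Icc (0:ℝ) 1 = Set.Icc (1/2:ℝ) 1 := by
      rw [inter_eq_left]; exact Icc_subset_Icc (by norm_num) le_rfl
    rw [this, Real.volume_Icc]; norm_num
  have h2 : (volume.restrict (Set.Icc (0 : ℝ) 1)) (dyadicA m) ≤ ENNReal.ofReal 1 := by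
    calc (volume.restrict (Set.Icc (0 : ℝ) 1)) (dyadicA m)
        ≤ (volume.restrict (Set.Icc (0 : ℝ) 1)) Set.univ := measure_mono (subset_univ _)
      _ = volume (Set.Icc (0:ℝ) 1) := by rw [Measure.restrict_apply_univ]
      _ = ENNReal.ofReal 1 := by rw [Real.volume_Icc]; norm_num
  have hfin : (volume.restrict (Set.Icc (0 : ℝ) 1)) (dyadicA m) ≠ ⊤ :=
    (h2.trans_lt ENNReal.ofReal_lt_top).ne
  have hmono : (volume.restrict (Set.Icc (0 : ℝ) 1)) (Set.Icc (1/2 : ℝ) 1) ≤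
      (volume.restrict (Set.Icc (0 : ℝ) 1)) (dyadicA m) :=
    measure_mono subset_union_right
  have := ENNReal.toReal_mono hfin hmono
  rw [h1, ENNReal.toReal_ofReal (by norm_num)] at this
  exact this

lemma dyadicA_inter_left (m : ℕ) (hm : 1 ≤ m) :
    ((volume.restrict (Set.Icc (0 : ℝ) 1)) (dyadicA m ∩ Set.Ico (0:ℝ) (1/2))).toReal
      ≤ 1 / m := by
  set L := Nat.log 2 m with hL
  set I : Set ℝ := Set.Icc (((m : ℝ) - 2 ^ L) / 2 ^ (L + 1))
      (((m : ℝ) - 2 ^ L + 1) / 2 ^ (L + 1)) with hI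
  have hsub : dyadicA m ∩ Set.Ico (0:ℝ) (1/2) ⊆ I := by
    intro x hx
    rcases hx.1 with h | h
    · exact h
    · exact absurd hx.2.2 (by simpa using h.1)
  have hvolI : volume I = ENNReal.ofReal (1 / 2 ^ (L + 1)) := by
    rw [hI, Real.volume_Icc]
    congr 1
    field_simp
    ring
  have key : (volume.restrict (Set.Icc (0 : ℝ) 1)) (dyadicA m ∩ Set.Ico (0:ℝ) (1/2))
      ≤ ENNReal.ofReal (1 / 2 ^ (L + 1)) := by
    calc (volume.restrict (Set.Icc (0 : ℝ) 1)) (dyadicA m ∩ Set.Ico (0:ℝ) (1/2))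
        ≤ volume (dyadicA m ∩ Set.Ico (0:ℝ) (1/2)) := Measure.restrict_le_self _
      _ ≤ volume I := measure_mono hsub
      _ = _ := hvolI
  have := ENNReal.toReal_mono (ENNReal.ofReal_ne_top) key
  rw [ENNReal.toReal_ofReal (by positivity)] at this
  refine this.trans ?_
  rw [div_le_div_iff₀ (by positivity)
    (show (0:ℝ) < m by exact_mod_cast Nat.pos_of_ne_zero (by omega))]
  have h1 : m < 2 ^ (L + 1) := Nat.lt_pow_succ_log_self one_lt_two m
  have h2 : (m : ℝ) < 2 ^ (L + 1) := by exact_mod_cast h1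
  linarith

lemma sum_inv_tau_le (τ : ℕ → ℕ) (hτ : StrictMono τ) (n : ℕ) (hn : 1 ≤ n) :
    ∑ i ∈ Finset.Icc 1 n, (1 : ℝ) / (τ i) ≤ Real.logb 2 (2 * (n:ℝ)) := by
  have step1 : ∑ i ∈ Finset.Icc 1 n, (1 : ℝ) / (τ i) ≤ ∑ i ∈ Finset.Icc 1 n, (1 : ℝ) / i := by
    refine Finset.sum_le_sum fun i hi => ?_
    have h1 : 1 ≤ i := (Finset.mem_Icc.mp hi).1
    have h2 : i ≤ τ i := hτ.le_apply
    apply one_div_le_one_div_of_le (by exact_mod_cast h1)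
    exact_mod_cast h2
  have step2 : ∑ i ∈ Finset.Icc 1 n, (1 : ℝ) / i = (harmonic n : ℝ) := by
    rw [harmonic_eq_sum_Icc]
    push_cast
    simp [one_div]
  have step3 : (harmonic n : ℝ) ≤ 1 + Real.log n := harmonic_le_one_add_log n
  have hlog2pos : (0:ℝ) < Real.log 2 := Real.log_pos one_lt_two
  have hlog2lt1 : Real.log 2 < 1 := by
    have := Real.log_two_lt_d9; linarith
  have hlogn : (0:ℝ) ≤ Real.log n := Real.log_nonneg (by exact_mod_cast hn)
  have step4 : 1 + Real.log n ≤ Real.logb 2 (2 * (n:ℝ)) := by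
    rw [Real.logb, Real.log_mul (by norm_num)
      (show (n:ℝ) ≠ 0 by exact_mod_cast (by omega : n ≠ 0))]
    rw [add_div, div_self hlog2pos.ne']
    have : Real.log n ≤ Real.log n / Real.log 2 := by
      rw [le_div_iff₀ hlog2pos]
      nlinarith
    linarith
  calc ∑ i ∈ Finset.Icc 1 n, (1 : ℝ) / (τ i) ≤ (harmonic n : ℝ) := step2 ▸ step1
    _ ≤ 1 + Real.log n := step3
    _ ≤ _ := step4

theorem dyadic_subsequence_moment_bound (τ : ℕ → ℕ) (hτ : StrictMono τ)
    (hτ1 : ∀ n, 1 ≤ τ n) (p : ℝ) (hp : p ∈ Set.Ioo (0 : ℝ) 1) (n : ℕ) (hn : 1 ≤ n) :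
    ∫ x, ((∑ i ∈ Finset.Icc 1 n, (dyadicA (τ i)).indicator (1 : ℝ → ℝ) x) /
          (∑ i ∈ Finset.Icc 1 n,
            ((volume.restrict (Set.Icc (0 : ℝ) 1)) (dyadicA (τ i))).toReal)) ^ p
        ∂(volume.restrict (Set.Icc (0 : ℝ) 1)) ≤
      ((Real.logb 2 (2 * n)) ^ p * (1 / 2 : ℝ) ^ (1 - p) + (n : ℝ) ^ p / 2) /
        ((n / 2 : ℝ) ^ p) := by
  obtain ⟨hp0, hp1⟩ := hp
  have hn0 : (1:ℝ) ≤ n := by exact_mod_cast hn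
  set μ : Measure ℝ := volume.restrict (Set.Icc (0 : ℝ) 1) with hμ
  haveI : IsFiniteMeasure μ := by
    constructor
    rw [hμ, Measure.restrict_apply_univ, Real.volume_Icc]
    exact ENNReal.ofReal_lt_top
  set D : ℝ := ∑ i ∈ Finset.Icc 1 n, (μ (dyadicA (τ i))).toReal with hDdef
  set S : ℝ → ℝ := fun x => ∑ i ∈ Finset.Icc 1 n, (dyadicA (τ i)).indicator (1 : ℝ → ℝ) x
    with hSdef
  show ∫ x, (S x / D) ^ p ∂μ ≤ _
  -- basic bounds
  have hDn : (n : ℝ) / 2 ≤ D := by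
    have h := Finset.sum_le_sum (s := Finset.Icc 1 n)
      (f := fun _ : ℕ => (1/2:ℝ)) (g := fun i => (μ (dyadicA (τ i))).toReal)
      (fun i _ => dyadicA_half_le (τ i))
    rw [Finset.sum_const, Nat.card_Icc] at h
    rw [hDdef]; simpa [nsmul_eq_mul, div_eq_mul_inv] using h
  have hD0 : (0:ℝ) < D := lt_of_lt_of_le (by positivity) hDn
  have hS0 : ∀ x, 0 ≤ S x := fun x =>
    Finset.sum_nonneg fun i _ => Set.indicator_nonneg (fun _ _ => zero_le_one) x
  have hSn : ∀ x, S x ≤ n := by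
    intro x
    have : S x ≤ ∑ _i ∈ Finset.Icc 1 n, (1:ℝ) := by
      refine Finset.sum_le_sum fun i _ => ?_
      classical
      by_cases h : x ∈ dyadicA (τ i) <;> simp [Set.indicator_apply, h]
    simpa [Nat.card_Icc] using this
  have hSmeas : Measurable S := by
    rw [hSdef]
    exact Finset.measurable_sum _ fun i _ => measurable_const.indicator (dyadicA_meas _)
  have hfmeas : Measurable fun x => (S x / D) ^ p := (hSmeas.div_const D).pow measurable_const
  have hf0 : ∀ x, 0 ≤ (S x / D) ^ p := fun x =>
    Real.rpow_nonneg (div_nonneg (hS0 x) hD0.le) p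
  have hSDle : ∀ x, S x / D ≤ (n:ℝ) / D := fun x => by
    have := hSn x; gcongr
  have hfle : ∀ x, (S x / D) ^ p ≤ ((n:ℝ) / D) ^ p := fun x =>
    Real.rpow_le_rpow (div_nonneg (hS0 x) hD0.le) (hSDle x) hp0.le
  have hfint : Integrable (fun x => (S x / D) ^ p) μ := by
    refine Integrable.mono' (integrable_const (((n:ℝ)/D) ^ p)) hfmeas.aestronglyMeasurable
      (ae_of_all _ fun x => ?_)
    rw [Real.norm_eq_abs, abs_of_nonneg (hf0 x)]
    exact hfle x
  have hSint : Integrable (fun x => S x / D) μ := by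
    refine Integrable.mono' (integrable_const ((n:ℝ)/D))
      ((hSmeas.div_const D).aestronglyMeasurable) (ae_of_all _ fun x => ?_)
    rw [Real.norm_eq_abs, abs_of_nonneg (div_nonneg (hS0 x) hD0.le)]
    exact hSDle x
  set u : Set ℝ := Set.Ico (0:ℝ) (1/2) with hudef
  have humeas : MeasurableSet u := measurableSet_Ico
  have hμu : μ u = ENNReal.ofReal (1/2) := by
    rw [hμ, Measure.restrict_apply measurableSet_Ico]
    have h1 : u ∩ Set.Icc (0:ℝ) 1 = u := by
      rw [inter_eq_left]
      intro x hx
      obtain ⟨hx1, hx2⟩ := hx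
      exact ⟨hx1, by linarith⟩
    rw [h1, hudef, Real.volume_Ico]
    norm_num
  have hμuc : μ uᶜ = ENNReal.ofReal (1/2) := by
    have h1 : μ Set.univ = 1 := by
      rw [hμ, Measure.restrict_apply_univ, Real.volume_Icc]; norm_num
    rw [measure_compl humeas (measure_ne_top μ u), h1, hμu,
      show (1:ENNReal) = ENNReal.ofReal 1 by simp,
      ← ENNReal.ofReal_sub _ (by norm_num)]
    norm_num
  -- Part B : integral over the complement of the left half
  have hB : ∫ x in uᶜ, (S x / D) ^ p ∂μ ≤ ((n:ℝ)/D) ^ p * (1/2) := by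
    calc ∫ x in uᶜ, (S x / D) ^ p ∂μ
        ≤ ∫ _x in uᶜ, ((n:ℝ)/D) ^ p ∂μ :=
          setIntegral_mono hfint.integrableOn
            (integrableOn_const (measure_lt_top μ _).ne) hfle
      _ = (μ uᶜ).toReal • (((n:ℝ)/D) ^ p) := setIntegral_const _
      _ = ((n:ℝ)/D) ^ p * (1/2) := by
          rw [hμuc, ENNReal.toReal_ofReal (by norm_num), smul_eq_mul, mul_comm]
  -- integral of S over the left half
  have hIS : ∫ x in u, S x ∂μ ≤ Real.logb 2 (2 * (n:ℝ)) := by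
    have heq : ∫ x in u, S x ∂μ
        = ∑ i ∈ Finset.Icc 1 n, (μ (dyadicA (τ i) ∩ u)).toReal := by
      simp only [hSdef]
      rw [show (1 : ℝ → ℝ) = fun _ => (1:ℝ) from rfl]
      rw [integral_finset_sum _
        (fun i _ => (integrable_const (1:ℝ)).indicator (dyadicA_meas (τ i)))]
      refine Finset.sum_congr rfl fun i _ => ?_
      rw [integral_indicator_const (1:ℝ) (dyadicA_meas (τ i)),
        measureReal_restrict_apply (dyadicA_meas (τ i)), smul_eq_mul, mul_one, measureReal_def]
    rw [heq]
    calc ∑ i ∈ Finset.Icc 1 n, (μ (dyadicA (τ i) ∩ u)).toReal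
        ≤ ∑ i ∈ Finset.Icc 1 n, (1:ℝ) / (τ i) :=
          Finset.sum_le_sum fun i _ => dyadicA_inter_left (τ i) (hτ1 i)
      _ ≤ Real.logb 2 (2 * (n:ℝ)) := sum_inv_tau_le τ hτ n hn
  have hIS0 : (0:ℝ) ≤ ∫ x in u, S x ∂μ := integral_nonneg fun x => hS0 x
  -- Jensen's inequality on the left half
  have hjen : ⨍ x in u, (S x / D) ^ p ∂μ ≤ (⨍ x in u, S x / D ∂μ) ^ p := by
    have hcont : ContinuousOn (fun y : ℝ => y ^ p) (Set.Ici 0) := fun x _ =>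
      (Real.continuousAt_rpow_const x p (Or.inr hp0.le)).continuousWithinAt
    exact (Real.concaveOn_rpow hp0.le hp1.le).le_map_set_average hcont isClosed_Ici
      (by rw [hμu]; simp) (measure_ne_top _ _)
      (ae_of_all _ fun x => Set.mem_Ici.mpr (div_nonneg (hS0 x) hD0.le))
      hSint.integrableOn hfint.integrableOn
  have havg : ∫ x in u, (S x / D) ^ p ∂μ ≤ (1/2) * (2 * ∫ x in u, S x / D ∂μ) ^ p := by
    have h2 : μ.real u = 1/2 := by
      rw [measureReal_def, hμu, ENNReal.toReal_ofReal (by norm_num)]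
    have h3 := hjen
    rw [setAverage_eq, setAverage_eq, h2, smul_eq_mul, smul_eq_mul,
      show ((1:ℝ)/2)⁻¹ = 2 by norm_num] at h3
    linarith
  have hSD : ∫ x in u, S x / D ∂μ = (∫ x in u, S x ∂μ) / D := integral_div D S
  have hA : ∫ x in u, (S x / D) ^ p ∂μ
      ≤ (1/2) * 2 ^ p * ((Real.logb 2 (2 * (n:ℝ))) ^ p / D ^ p) := by
    refine havg.trans ?_
    have e : (2:ℝ) * ∫ x in u, S x / D ∂μ = 2 * (∫ x in u, S x ∂μ) / D := by
      rw [hSD]; ring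
    rw [e, Real.div_rpow (by nlinarith) hD0.le, Real.mul_rpow (by norm_num) hIS0]
    have hnum : (∫ x in u, S x ∂μ) ^ p ≤ (Real.logb 2 (2 * (n:ℝ))) ^ p :=
      Real.rpow_le_rpow hIS0 hIS hp0.le
    have hDp0 : (0:ℝ) < D ^ p := Real.rpow_pos_of_pos hD0 p
    have h2p0 : (0:ℝ) ≤ (2:ℝ) ^ p := Real.rpow_nonneg (by norm_num) p
    rw [show (1:ℝ)/2 * 2 ^ p * ((Real.logb 2 (2 * (n:ℝ))) ^ p / D ^ p)
        = 1/2 * (2 ^ p * (Real.logb 2 (2 * (n:ℝ))) ^ p / D ^ p) by ring]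
    gcongr
  -- combine
  have hsplit : ∫ x, (S x / D) ^ p ∂μ
      = ∫ x in u, (S x / D) ^ p ∂μ + ∫ x in uᶜ, (S x / D) ^ p ∂μ :=
    (integral_add_compl humeas hfint).symm
  have hlogb0 : (0:ℝ) ≤ Real.logb 2 (2 * (n:ℝ)) :=
    Real.logb_nonneg one_lt_two (by linarith)
  have hhalf : ((1:ℝ)/2) ^ (1 - p) = (1/2) * (2:ℝ) ^ p := by
    rw [one_div, Real.inv_rpow (by norm_num : (0:ℝ) ≤ 2),
      ← Real.rpow_neg (by norm_num : (0:ℝ) ≤ 2),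
      show -(1 - p) = -1 + p by ring,
      Real.rpow_add (by norm_num : (0:ℝ) < 2), Real.rpow_neg_one]
  set Lg : ℝ := Real.logb 2 (2 * (n:ℝ)) with hLg
  set Q : ℝ := ((n:ℝ) / 2) ^ p with hQ
  have hQ0 : (0:ℝ) < Q := Real.rpow_pos_of_pos (by positivity) p
  have hDpQ : Q ≤ D ^ p := Real.rpow_le_rpow (by positivity) hDn hp0.le
  have hDp0 : (0:ℝ) < D ^ p := Real.rpow_pos_of_pos hD0 p
  have hnp0 : (0:ℝ) ≤ (n:ℝ) ^ p := Real.rpow_nonneg (by positivity) p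
  have hLgp0 : (0:ℝ) ≤ Lg ^ p := Real.rpow_nonneg hlogb0 p
  have key1 : Lg ^ p / D ^ p ≤ Lg ^ p / Q := by gcongr
  have key2 : (n:ℝ) ^ p / D ^ p ≤ (n:ℝ) ^ p / Q := by gcongr
  have hnD : ((n:ℝ)/D) ^ p = (n:ℝ) ^ p / D ^ p := Real.div_rpow (by positivity) hD0.le p
  rw [hsplit, hhalf]
  have h2p0 : (0:ℝ) ≤ (2:ℝ) ^ p := Real.rpow_nonneg (by norm_num) p
  calc ∫ x in u, (S x / D) ^ p ∂μ + ∫ x in uᶜ, (S x / D) ^ p ∂μ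
      ≤ (1/2) * 2 ^ p * (Lg ^ p / D ^ p) + ((n:ℝ) ^ p / D ^ p) * (1/2) := by
        rw [← hnD]; exact add_le_add hA hB
    _ ≤ (1/2) * 2 ^ p * (Lg ^ p / Q) + ((n:ℝ) ^ p / Q) * (1/2) := by
        refine add_le_add (mul_le_mul_of_nonneg_left key1 (by positivity))
          (mul_le_mul_of_nonneg_right key2 (by norm_num))
    _ = (Lg ^ p * ((1/2) * 2 ^ p) + (n:ℝ) ^ p / 2) / Q := by ring
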